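/- (Estimate (29) in the proof of Lemma 6.3) Suppose V satisfies (V₂) with constants β > 1, M₀ > 0, r₀ ≥ 1, let H > 0 and η ∈ (0,1), and set c := √(2(1-η²)H). Let t₀ < t₁ and let u : [t₀,t₁] → ℝ^N \ {0} be twice continuously differentiable with ü(t) + ∇V(u(t)) = 0 on [t₀,t₁], such that |u(s)| ≥ r₀ and (d/ds)|u(s)| ≥ c for all s ∈ [t₀,t₁]. Define A(t) := √(|u(t)|² |u̇(t)|² - (u(t), u̇(t))²). Then for every t ∈ [t₀,t₁], A(t) ≤ A(t₀) + M₀ / ( c (β-1) |u(t₀)|^{β-1} ). -/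

import Mathlib

open scoped InnerProductSpace

private lemma sqrt_add_le' (x y : ℝ) (hx : 0 ≤ x) (hy : 0 ≤ y) :
    Real.sqrt (x + y) ≤ Real.sqrt x + Real.sqrt y := by
  have h1 : x + y ≤ (Real.sqrt x + Real.sqrt y) ^ 2 := by
    have := Real.sq_sqrt hx
    have := Real.sq_sqrt hy
    have := Real.sqrt_nonneg x
    have := Real.sqrt_nonneg y
    nlinarith
  calc Real.sqrt (x + y) ≤ Real.sqrt ((Real.sqrt x + Real.sqrt y) ^ 2) :=
        Real.sqrt_le_sqrt h1
    _ = Real.sqrt x + Real.sqrt y := Real.sqrt_sq (by positivity)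

/-- Estimate (29) in the proof of Lemma 6.3: under (V₂), for a solution of
`ü + ∇V(u) = 0` on `[t₀,t₁]` with `‖u‖ ≥ r₀` and `(d/ds)‖u s‖ ≥ c = √(2(1-η²)H)`,
one has `A t ≤ A t₀ + M₀ / (c (β-1) ‖u t₀‖^(β-1))`. -/
theorem stmt_16 {N : ℕ} (hN : 2 ≤ N) (V : EuclideanSpace ℝ (Fin N) → ℝ)
    (hV : ContDiffOn ℝ 1 V {0}ᶜ)
    (β M₀ r₀ : ℝ) (hβ : 1 < β) (hM₀ : 0 < M₀) (hr₀ : 1 ≤ r₀)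
    (hV2 : ∀ x : EuclideanSpace ℝ (Fin N), r₀ ≤ ‖x‖ →
      ‖x‖ ^ (β + 1) * ‖gradient V x‖ ≤ M₀)
    (H : ℝ) (hH : 0 < H) (η : ℝ) (hη : η ∈ Set.Ioo (0 : ℝ) 1)
    (c : ℝ) (hc : c = Real.sqrt (2 * (1 - η ^ 2) * H))
    (t₀ t₁ : ℝ) (ht : t₀ < t₁)
    (u : ℝ → EuclideanSpace ℝ (Fin N))
    (hu : ContDiffOn ℝ 2 u (Set.Icc t₀ t₁))
    (hu0 : ∀ t ∈ Set.Icc t₀ t₁, u t ≠ 0)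
    (hode : ∀ t ∈ Set.Icc t₀ t₁,
      derivWithin (derivWithin u (Set.Icc t₀ t₁)) (Set.Icc t₀ t₁) t
        + gradient V (u t) = 0)
    (hr : ∀ s ∈ Set.Icc t₀ t₁, r₀ ≤ ‖u s‖)
    (hd : ∀ s ∈ Set.Icc t₀ t₁,
      c ≤ derivWithin (fun τ => ‖u τ‖) (Set.Icc t₀ t₁) s)
    (A : ℝ → ℝ)
    (hA : ∀ t, A t = Real.sqrt
      (‖u t‖ ^ 2 * ‖derivWithin u (Set.Icc t₀ t₁) t‖ ^ 2
        - ⟪u t, derivWithin u (Set.Icc t₀ t₁) t⟫_ℝ ^ 2)) :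
    ∀ t ∈ Set.Icc t₀ t₁,
      A t ≤ A t₀ + M₀ / (c * (β - 1) * ‖u t₀‖ ^ (β - 1)) := by
  intro t htI
  have htt : t₀ ∈ Set.Icc t₀ t₁ := Set.left_mem_Icc.2 ht.le
  set I : Set ℝ := Set.Icc t₀ t₁ with hIdef
  have hIU : UniqueDiffOn ℝ I := uniqueDiffOn_Icc ht
  set u' := derivWithin u I with hu'def
  set u'' := derivWithin u' I with hu''def
  have hud : DifferentiableOn ℝ u I := hu.differentiableOn two_ne_zero
  have hu'c : ContDiffOn ℝ 1 u' I := hu.derivWithin hIU (by norm_num)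
  have hu'd : DifferentiableOn ℝ u' I := hu'c.differentiableOn one_ne_zero
  -- positivity of c
  have hc0 : 0 < c := by
    rw [hc]
    apply Real.sqrt_pos.2
    have h1 : η ^ 2 < 1 := by nlinarith [hη.1, hη.2]
    nlinarith
  set r := ‖u t₀‖ with hrdef
  have hr1 : (1 : ℝ) ≤ r := le_trans hr₀ (hr t₀ htt)
  have hr0 : (0 : ℝ) < r := lt_of_lt_of_le one_pos hr1
  -- Step 1: lower bound on ‖u s‖
  have hlow : ∀ s ∈ I, r + c * (s - t₀) ≤ ‖u s‖ := by
    have hmono : MonotoneOn (fun s => ‖u s‖ - c * s) I := by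
      apply monotoneOn_of_deriv_nonneg (convex_Icc _ _)
      · exact (hu.continuousOn.norm).sub (continuous_const.mul continuous_id).continuousOn
      · intro x hx
        rw [interior_Icc] at hx
        have hxI : x ∈ I := Set.mem_Icc_of_Ioo hx
        have hnd : DifferentiableAt ℝ (fun τ => ‖u τ‖) x :=
          ((hud x hxI).norm ℝ (hu0 x hxI)).differentiableAt (Icc_mem_nhds hx.1 hx.2)
        exact (hnd.sub (by fun_prop)).differentiableWithinAt
      · intro x hx
        rw [interior_Icc] at hx
        have hxI : x ∈ I := Set.mem_Icc_of_Ioo hx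
        have hmem : I ∈ nhds x := Icc_mem_nhds hx.1 hx.2
        have hnd : DifferentiableAt ℝ (fun τ => ‖u τ‖) x :=
          ((hud x hxI).norm ℝ (hu0 x hxI)).differentiableAt hmem
        have hcx : HasDerivAt (fun s : ℝ => c * s) c x := by
          simpa using (hasDerivAt_id x).const_mul c
        have hder : deriv (fun s => ‖u s‖ - c * s) x
            = deriv (fun τ => ‖u τ‖) x - c := by
          exact (hnd.hasDerivAt.sub hcx).deriv
        rw [hder]
        have := hd x hxI
        rw [derivWithin_of_mem_nhds hmem] at this
        linarith
    intro s hs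
    have := hmono htt hs hs.1
    simp only at this
    linarith
  -- The quantity F and its basic properties
  set F : ℝ → ℝ := fun s => ⟪u s, u s⟫_ℝ * ⟪u' s, u' s⟫_ℝ - ⟪u s, u' s⟫_ℝ ^ 2 with hFdef
  have hFA : ∀ s, A s = Real.sqrt (F s) := by
    intro s
    rw [hA s, hFdef]
    simp only [real_inner_self_eq_norm_sq]
  have hF0 : ∀ s, 0 ≤ F s := by
    intro s
    have := real_inner_mul_inner_self_le (u s) (u' s)
    simp only [hFdef]
    nlinarith
  -- derivative of F
  have hFderiv : ∀ x ∈ I, HasDerivWithinAt F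
      (2 * (⟪u x, u x⟫_ℝ * ⟪u' x, u'' x⟫_ℝ - ⟪u x, u' x⟫_ℝ * ⟪u x, u'' x⟫_ℝ)) I x := by
    intro x hx
    have h1 : HasDerivWithinAt u (u' x) I x := (hud x hx).hasDerivWithinAt
    have h2 : HasDerivWithinAt u' (u'' x) I x := (hu'd x hx).hasDerivWithinAt
    have hP := (h1.inner ℝ h1).mul (h2.inner ℝ h2)
    have hR := (h1.inner ℝ h2).pow 2
    have := hP.sub hR
    refine this.congr_deriv ?_
    simp only [real_inner_comm (u' x) (u x), real_inner_comm (u'' x) (u' x),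
      real_inner_comm (u'' x) (u x)]
    ring
  -- the pointwise bound on the derivative of F
  have hFbound : ∀ x ∈ I,
      2 * (⟪u x, u x⟫_ℝ * ⟪u' x, u'' x⟫_ℝ - ⟪u x, u' x⟫_ℝ * ⟪u x, u'' x⟫_ℝ)
        ≤ 2 * Real.sqrt (F x) * (‖u x‖ * ‖gradient V (u x)‖) := by
    intro x hx
    set w := gradient V (u x) with hwdef
    have hu''x : u'' x = -w := eq_neg_of_add_eq_zero_left (hode x hx)
    set v := ⟪u x, u x⟫_ℝ • u' x - ⟪u x, u' x⟫_ℝ • u x with hvdef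
    have hv2 : ‖v‖ ^ 2 = ⟪u x, u x⟫_ℝ * F x := by
      rw [← real_inner_self_eq_norm_sq, hvdef, hFdef]
      simp only [inner_sub_left, inner_sub_right, real_inner_smul_left, real_inner_smul_right,
        real_inner_comm (u' x) (u x)]
      ring
    have hvnorm : ‖v‖ = ‖u x‖ * Real.sqrt (F x) := by
      have h1 : ‖v‖ = Real.sqrt (‖v‖ ^ 2) := (Real.sqrt_sq (norm_nonneg v)).symm
      rw [h1, hv2, real_inner_self_eq_norm_sq,
        Real.sqrt_mul (by positivity), Real.sqrt_sq (norm_nonneg _)]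
    have hkey : 2 * (⟪u x, u x⟫_ℝ * ⟪u' x, u'' x⟫_ℝ - ⟪u x, u' x⟫_ℝ * ⟪u x, u'' x⟫_ℝ)
        = -(2 * ⟪v, w⟫_ℝ) := by
      rw [hu''x, hvdef]
      simp only [inner_sub_left, real_inner_smul_left, inner_neg_right]
      ring
    rw [hkey]
    have habs : |⟪v, w⟫_ℝ| ≤ ‖v‖ * ‖w‖ := abs_real_inner_le_norm v w
    have h2 : -⟪v, w⟫_ℝ ≤ ‖v‖ * ‖w‖ := by
      have := neg_abs_le ⟪v, w⟫_ℝ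
      linarith
    calc -(2 * ⟪v, w⟫_ℝ) = 2 * (-⟪v, w⟫_ℝ) := by ring
      _ ≤ 2 * (‖v‖ * ‖w‖) := by linarith
      _ = 2 * Real.sqrt (F x) * (‖u x‖ * ‖w‖) := by rw [hvnorm]; ring
  have hX0 : ∀ x ∈ I, (0 : ℝ) < r + c * (x - t₀) := by
    intro x hx
    have : (0:ℝ) ≤ c * (x - t₀) := mul_nonneg hc0.le (by linarith [hx.1])
    linarith
  -- bound ‖u x‖ * ‖grad‖ ≤ M₀ * (r + c (x - t₀))^(-β)
  have hgbound : ∀ x ∈ I,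
      ‖u x‖ * ‖gradient V (u x)‖ ≤ M₀ * (r + c * (x - t₀)) ^ (-β) := by
    intro x hx
    have hrx : r₀ ≤ ‖u x‖ := hr x hx
    have hux0 : (0 : ℝ) < ‖u x‖ := lt_of_lt_of_le (lt_of_lt_of_le one_pos hr₀) hrx
    have hXpos := hX0 x hx
    have hXle : r + c * (x - t₀) ≤ ‖u x‖ := hlow x hx
    have hV2x := hV2 (u x) hrx
    have hsplit : ‖u x‖ ^ (β + 1) = ‖u x‖ ^ β * ‖u x‖ := by
      rw [Real.rpow_add hux0, Real.rpow_one]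
    have hβpos : (0 : ℝ) < β := by linarith
    have hXβ : (r + c * (x - t₀)) ^ β ≤ ‖u x‖ ^ β :=
      Real.rpow_le_rpow hXpos.le hXle hβpos.le
    have hXβ0 : (0 : ℝ) < (r + c * (x - t₀)) ^ β := Real.rpow_pos_of_pos hXpos β
    have huβ0 : (0 : ℝ) < ‖u x‖ ^ β := Real.rpow_pos_of_pos hux0 β
    have h1 : ‖u x‖ ^ β * (‖u x‖ * ‖gradient V (u x)‖) ≤ M₀ := by
      rw [← mul_assoc, ← hsplit]
      exact hV2x
    have hgn : 0 ≤ ‖u x‖ * ‖gradient V (u x)‖ := by positivity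
    have h2 : (r + c * (x - t₀)) ^ β * (‖u x‖ * ‖gradient V (u x)‖) ≤ M₀ :=
      le_trans (mul_le_mul_of_nonneg_right hXβ hgn) h1
    rw [Real.rpow_neg hXpos.le]
    calc ‖u x‖ * ‖gradient V (u x)‖
        = (r + c * (x - t₀)) ^ β * (‖u x‖ * ‖gradient V (u x)‖) * ((r + c * (x - t₀)) ^ β)⁻¹ := by
          field_simp
      _ ≤ M₀ * ((r + c * (x - t₀)) ^ β)⁻¹ := by
          apply mul_le_mul_of_nonneg_right h2 (by positivity)
  -- the antiderivative B
  set K := M₀ / (c * (β - 1)) with hKdef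
  have hβ1 : (0:ℝ) < β - 1 := by linarith
  have hK0 : 0 < K := div_pos hM₀ (by positivity)
  set B : ℝ → ℝ := fun s => K * (r ^ (1 - β) - (r + c * (s - t₀)) ^ (1 - β)) with hBdef
  have hBt0 : B t₀ = 0 := by
    simp [hBdef]
  have hBderiv : ∀ x ∈ Set.Ioo t₀ t₁,
      HasDerivAt B (M₀ * (r + c * (x - t₀)) ^ (-β)) x := by
    intro x hx
    have hXpos : (0:ℝ) < r + c * (x - t₀) := hX0 x (Set.mem_Icc_of_Ioo hx)
    have hbase : HasDerivAt (fun s : ℝ => r + c * (s - t₀)) c x := by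
      simpa using (((hasDerivAt_id x).sub_const t₀).const_mul c).const_add r
    have hpow := hbase.rpow_const (p := 1 - β) (Or.inl hXpos.ne')
    have hfull := ((hasDerivAt_const x ((r:ℝ) ^ (1 - β))).sub hpow).const_mul K
    refine hfull.congr_deriv ?_
    rw [show (1 - β - 1) = -β by ring]
    have hc1 : c * (β - 1) ≠ 0 := by positivity
    rw [hKdef]
    field_simp
    ring
  -- the epsilon argument
  have main : ∀ ε : ℝ, 0 < ε → A t ≤ Real.sqrt (F t₀ + ε) + B t := by
    intro ε hε
    set Φ : ℝ → ℝ := fun s => B s - Real.sqrt (F s + ε) with hΦdef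
    have hFcont : ContinuousOn F I := by
      have cu : ContinuousOn u I := hu.continuousOn
      have cu' : ContinuousOn u' I := hu'c.continuousOn
      exact ((cu.inner cu).mul (cu'.inner cu')).sub ((cu.inner cu').pow 2)
    have hΦmono : MonotoneOn Φ I := by
      apply monotoneOn_of_deriv_nonneg (convex_Icc _ _)
      · apply ContinuousOn.sub
        · apply ContinuousOn.mul continuousOn_const
          apply ContinuousOn.sub continuousOn_const
          apply ContinuousOn.rpow_const
          · fun_prop
          · intro s hs
            exact Or.inl (hX0 s hs).ne'
        · exact Real.continuous_sqrt.comp_continuousOn (hFcont.add continuousOn_const)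
      · intro x hx
        rw [interior_Icc] at hx
        have hxI : x ∈ I := Set.mem_Icc_of_Ioo hx
        have hF : HasDerivAt F
            (2 * (⟪u x, u x⟫_ℝ * ⟪u' x, u'' x⟫_ℝ - ⟪u x, u' x⟫_ℝ * ⟪u x, u'' x⟫_ℝ)) x :=
          (hFderiv x hxI).hasDerivAt (Icc_mem_nhds hx.1 hx.2)
        have hFε : (0:ℝ) < F x + ε := by have := hF0 x; linarith
        have hsq := (hF.add_const ε).sqrt hFε.ne'
        exact ((hBderiv x hx).sub hsq).differentiableAt.differentiableWithinAt
      · intro x hx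
        rw [interior_Icc] at hx
        have hxI : x ∈ I := Set.mem_Icc_of_Ioo hx
        set D := 2 * (⟪u x, u x⟫_ℝ * ⟪u' x, u'' x⟫_ℝ - ⟪u x, u' x⟫_ℝ * ⟪u x, u'' x⟫_ℝ) with hDdef
        have hF : HasDerivAt F D x := (hFderiv x hxI).hasDerivAt (Icc_mem_nhds hx.1 hx.2)
        have hFε : (0:ℝ) < F x + ε := by have := hF0 x; linarith
        have hsq := (hF.add_const ε).sqrt hFε.ne'
        have hΦ := (hBderiv x hx).sub hsq
        rw [show deriv Φ x = _ from hΦ.deriv]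
        have hsle : Real.sqrt (F x) ≤ Real.sqrt (F x + ε) := Real.sqrt_le_sqrt (by linarith)
        have hgb := hgbound x hxI
        have hFb := hFbound x hxI
        have hspos : (0:ℝ) < Real.sqrt (F x + ε) := Real.sqrt_pos.2 hFε
        have hgn : (0:ℝ) ≤ ‖u x‖ * ‖gradient V (u x)‖ := by positivity
        have hDle : D ≤ 2 * Real.sqrt (F x + ε) * (M₀ * (r + c * (x - t₀)) ^ (-β)) := by
          calc D ≤ 2 * Real.sqrt (F x) * (‖u x‖ * ‖gradient V (u x)‖) := hFb
            _ ≤ 2 * Real.sqrt (F x + ε) * (M₀ * (r + c * (x - t₀)) ^ (-β)) := by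
                apply mul_le_mul (by linarith) hgb hgn (by positivity)
        have hdiv : D / (2 * Real.sqrt (F x + ε)) ≤ M₀ * (r + c * (x - t₀)) ^ (-β) := by
          rw [div_le_iff₀ (by positivity)]
          calc D ≤ 2 * Real.sqrt (F x + ε) * (M₀ * (r + c * (x - t₀)) ^ (-β)) := hDle
            _ = M₀ * (r + c * (x - t₀)) ^ (-β) * (2 * Real.sqrt (F x + ε)) := by ring
        linarith
    have h1 := hΦmono htt htI htI.1
    simp only [hΦdef, hBt0, zero_sub] at h1
    have h2 : Real.sqrt (F t) ≤ Real.sqrt (F t + ε) := Real.sqrt_le_sqrt (by linarith)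
    rw [hFA t]
    linarith
  -- conclude
  have hBtle : B t ≤ M₀ / (c * (β - 1) * r ^ (β - 1)) := by
    have hXnn : (0:ℝ) ≤ (r + c * (t - t₀)) ^ (1 - β) :=
      Real.rpow_nonneg (hX0 t htI).le _
    have hrw : K * r ^ (1 - β) = M₀ / (c * (β - 1) * r ^ (β - 1)) := by
      have hrpos : (0:ℝ) < r ^ (β - 1) := Real.rpow_pos_of_pos hr0 _
      rw [show (1 - β) = -(β - 1) by ring, Real.rpow_neg hr0.le, hKdef]
      rw [div_eq_mul_inv, div_eq_mul_inv, mul_inv (c * (β - 1)) (r ^ (β - 1))]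
      ring
    calc B t = K * r ^ (1 - β) - K * (r + c * (t - t₀)) ^ (1 - β) := by rw [hBdef]; ring
      _ ≤ K * r ^ (1 - β) := by nlinarith
      _ = M₀ / (c * (β - 1) * r ^ (β - 1)) := hrw
  by_contra hcon
  push_neg at hcon
  set δ := (A t - (A t₀ + M₀ / (c * (β - 1) * r ^ (β - 1)))) / 2 with hδdef
  have hδ0 : 0 < δ := by
    simp only [hδdef]
    linarith
  have := main (δ ^ 2) (by positivity)
  have hsub : Real.sqrt (F t₀ + δ ^ 2) ≤ Real.sqrt (F t₀) + δ := by
    have := sqrt_add_le' (F t₀) (δ ^ 2) (hF0 t₀) (by positivity)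
    rwa [Real.sqrt_sq hδ0.le] at this
  rw [← hFA t₀] at hsub
  linarith
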